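/- Let σ ∈ (0, 1/2) and ρ ∈ (0,1). Suppose x_k ∈ 𝔹 is a sequence with F(x_k) ≠ 0 for all k, and for each k the direction d_k is either a Newton direction at x_k or d_k = −F(x_k), with ⟪F(x_k), d_k⟫ < 0; let α_k := ρ^{j_k} where j_k is the smallest natural number j such that φ(x_k(ρ^j)) ≤ φ(x_k) + σ ρ^j ⟪F(x_k), d_k⟫ (here x_k(α) := (x_k + α d_k)/‖x_k + α d_k‖), and x_{k+1} := x_k(α_k). Then the sequence {φ(x_k)} is strictly decreasing and {x_k} is bounded. Moreover, if x̄ ∈ 𝔹 is such that some subsequence satisfies x_k → x̄ and d_k → d̄ for some d̄ ∈ E, and ⟪d, F′(x̄) d⟫ > 0 for every nonzero d ∈ E with ⟪x̄, d⟫ = 0, then F(x̄) = 0, i.e. x̄ is a Z-eigenvector of A corresponding to the eigenvalue A x̄^m. -/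

import Mathlib

open scoped RealInnerProductSpace

noncomputable section

/-- Euclidean space `ℝ^n`. -/
abbrev Euc (n : ℕ) : Type := EuclideanSpace ℝ (Fin n)

/-- An `m`-th order tensor on `ℝ^n`, viewed as a continuous `m`-multilinear form. -/
abbrev Tensor (m n : ℕ) : Type := ContinuousMultilinearMap ℝ (fun _ : Fin m => Euc n) ℝ

/-- A tensor is symmetric if it is invariant under every permutation of its arguments. -/
def IsSymmTensor {m n : ℕ} (A : Tensor m n) : Prop :=
  ∀ (e : Equiv.Perm (Fin m)) (v : Fin m → Euc n), A (v ∘ e) = A v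

/-- `A x^m`, the homogeneous form `A (x, …, x)`. -/
def tpow {m n : ℕ} (A : Tensor m n) (x : Euc n) : ℝ := A (fun _ => x)

/-- The last index of `Fin m`. -/
def lastIdx {m : ℕ} (_hm : 2 ≤ m) : Fin m := ⟨m - 1, by omega⟩

/-- The second to last index of `Fin m`. -/
def sndIdx {m : ℕ} (_hm : 2 ≤ m) : Fin m := ⟨m - 2, by omega⟩

lemma sndIdx_ne_lastIdx {m : ℕ} (hm : 2 ≤ m) : sndIdx hm ≠ lastIdx hm := by
  simp only [sndIdx, lastIdx, Fin.mk.injEq, ne_eq]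
  omega

/-- `A x^{m-1}`: the unique vector with `⟪A x^{m-1}, v⟫ = A (x, …, x, v)` for all `v`. -/
def tvec {m n : ℕ} (A : Tensor m n) (hm : 2 ≤ m) (x : Euc n) : Euc n :=
  (InnerProductSpace.toDual ℝ (Euc n)).symm
    (A.toContinuousLinearMap (fun _ => x) (lastIdx hm))

/-- `F(x) = A x^{m-1} - (A x^m) • x`. -/
def Fvec {m n : ℕ} (A : Tensor m n) (hm : 2 ≤ m) (x : Euc n) : Euc n :=
  tvec A hm x - tpow A x • x

/-- `φ(x) = (1/m) A x^m`. -/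
def phi {m n : ℕ} (A : Tensor m n) (x : Euc n) : ℝ := (1 / (m : ℝ)) * tpow A x

/-- Orthogonal projection `P_x d = d - ⟪x, d⟫ x` (for `x` a unit vector). -/
def Pproj {n : ℕ} (x d : Euc n) : Euc n := d - ⟪x, d⟫ • x

/-- `x(α) = (x + α d)/‖x + α d‖`, the projection of `x + α d` onto the unit sphere. -/
def xcur {n : ℕ} (x d : Euc n) (α : ℝ) : Euc n := ‖x + α • d‖⁻¹ • (x + α • d)

/-- `w(x, d)`: the unique vector with `⟪w(x, d), v⟫ = A (x, …, x, d, v)` for all `v`. -/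
def wvec {m n : ℕ} (A : Tensor m n) (hm : 2 ≤ m) (x d : Euc n) : Euc n :=
  (InnerProductSpace.toDual ℝ (Euc n)).symm
    (A.toContinuousLinearMap (Function.update (fun _ => x) (sndIdx hm) d) (lastIdx hm))

/-- `A (x, …, x, d, d)`. -/
def A2 {m n : ℕ} (A : Tensor m n) (hm : 2 ≤ m) (x d : Euc n) : ℝ :=
  A (Function.update (Function.update (fun _ => x) (sndIdx hm) d) (lastIdx hm) d)

lemma wvec_add {m n : ℕ} (A : Tensor m n) (hm : 2 ≤ m) (x d₁ d₂ : Euc n) :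
    wvec A hm x (d₁ + d₂) = wvec A hm x d₁ + wvec A hm x d₂ := by
  unfold wvec
  rw [← map_add]
  congr 1
  ext v
  simp only [ContinuousMultilinearMap.toContinuousLinearMap_apply, ContinuousLinearMap.add_apply]
  rw [Function.update_comm (sndIdx_ne_lastIdx hm), Function.update_comm (sndIdx_ne_lastIdx hm),
    Function.update_comm (sndIdx_ne_lastIdx hm)]
  exact A.map_update_add _ _ _ _

lemma wvec_smul {m n : ℕ} (A : Tensor m n) (hm : 2 ≤ m) (x : Euc n) (c : ℝ) (d : Euc n) :
    wvec A hm x (c • d) = c • wvec A hm x d := by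
  unfold wvec
  rw [← map_smul]
  congr 1
  ext v
  simp only [ContinuousMultilinearMap.toContinuousLinearMap_apply,
    ContinuousLinearMap.smul_apply, smul_eq_mul]
  rw [Function.update_comm (sndIdx_ne_lastIdx hm), Function.update_comm (sndIdx_ne_lastIdx hm)]
  exact A.map_update_smul _ _ _ _

/-- The Jacobian `F'(x) d = (m-1) w(x,d) - (A x^m) d - m ⟪A x^{m-1}, d⟫ x`. -/
def FderivL {m n : ℕ} (A : Tensor m n) (hm : 2 ≤ m) (x : Euc n) : Euc n →L[ℝ] Euc n :=
  LinearMap.toContinuousLinearMap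
  { toFun := fun d =>
      ((m : ℝ) - 1) • wvec A hm x d - tpow A x • d - ((m : ℝ) * ⟪tvec A hm x, d⟫) • x
    map_add' := by
      intro d₁ d₂
      try simp only
      rw [wvec_add, inner_add_right]
      module
    map_smul' := by
      intro c d
      simp only [RingHom.id_apply]
      rw [wvec_smul, inner_smul_right]
      module }

/-- A Newton direction at `x`: `⟪x, d⟫ = 0` and `P_x (F'(x) d + F(x)) = 0`. -/
def NewtonDir {m n : ℕ} (A : Tensor m n) (hm : 2 ≤ m) (x d : Euc n) : Prop :=
  ⟪x, d⟫ = 0 ∧ Pproj x (FderivL A hm x d + Fvec A hm x) = 0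

/-- The residual function `θ(x) = (1/2)‖F(x)‖²`. -/
def theta {m n : ℕ} (A : Tensor m n) (hm : 2 ≤ m) (x : Euc n) : ℝ :=
  (1 / 2) * ‖Fvec A hm x‖ ^ 2

/-- Assumption (A): second-order sufficient condition at the KKT point `x̄`. -/
def AssumpA {m n : ℕ} (A : Tensor m n) (hm : 2 ≤ m) (xb : Euc n) (lam : ℝ) : Prop :=
  ‖xb‖ = 1 ∧ tvec A hm xb = lam • xb ∧ lam = tpow A xb ∧
    ∀ d : Euc n, d ≠ 0 → ⟪xb, d⟫ = 0 →
      0 < ((m : ℝ) - 1) * A2 A hm xb d - lam * ‖d‖ ^ 2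

variable {m n : ℕ} (A : Tensor m n) (hm : 2 ≤ m)

lemma inner_tvec (x v : Euc n) :
    ⟪tvec A hm x, v⟫ = A (Function.update (fun _ => x) (lastIdx hm) v) := by
  rw [tvec, InnerProductSpace.toDual_symm_apply]
  rfl

lemma inner_wvec (x d v : Euc n) :
    ⟪wvec A hm x d, v⟫ =
      A (Function.update (Function.update (fun _ => x) (sndIdx hm) d) (lastIdx hm) v) := by
  rw [wvec, InnerProductSpace.toDual_symm_apply]
  rfl

lemma update_const_comp_swap {α β : Type*} [DecidableEq α] (x v : β) (a b : α) :
    (Function.update (fun _ => x) a v) ∘ (Equiv.swap a b) = Function.update (fun _ => x) b v := by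
  funext j
  rcases eq_or_ne j b with rfl | hjb
  · simp only [Function.comp_apply]
    rw [Equiv.swap_apply_right]
    simp
  · rcases eq_or_ne j a with rfl | hja
    · rcases eq_or_ne j b with rfl | h
      · simp
      · simp [Equiv.swap_apply_left, Function.update_apply, Ne.symm h, hjb]
    · simp [Equiv.swap_apply_of_ne_of_ne hja hjb, Function.update_apply, hja, hjb]

lemma apply_update_const (hA : IsSymmTensor A) (x v : Euc n) (i : Fin m) :
    A (Function.update (fun _ => x) i v) = ⟪tvec A hm x, v⟫ := by
  rw [inner_tvec, ← update_const_comp_swap x v (lastIdx hm) i, hA]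

lemma inner_tvec_self (x : Euc n) : ⟪tvec A hm x, x⟫ = tpow A x := by
  rw [inner_tvec]
  congr 1
  exact Function.update_eq_self _ _

lemma continuous_euc {X : Type*} [TopologicalSpace X] {f : X → Euc n}
    (h : ∀ i : Fin n, Continuous fun x => f x i) : Continuous f := by
  have : f = fun x => (EuclideanSpace.equiv (Fin n) ℝ).symm (fun i => f x i) := by
    funext x; rfl
  rw [this]
  exact (EuclideanSpace.equiv (Fin n) ℝ).symm.continuous.comp (continuous_pi h)

lemma euc_coord (v : Euc n) (i : Fin n) : v i = ⟪v, EuclideanSpace.single i (1 : ℝ)⟫ := by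
  rw [EuclideanSpace.inner_single_right]; simp

lemma continuous_diagE : Continuous (fun x : Euc n => (fun _ : Fin m => x)) :=
  continuous_pi fun _ => continuous_id

lemma continuous_tpow : Continuous (tpow A) :=
  A.coe_continuous.comp continuous_diagE

lemma continuous_update2 (v : Euc n) :
    Continuous (fun p : Euc n × Euc n =>
      Function.update (Function.update (fun _ : Fin m => p.1) (sndIdx hm) p.2) (lastIdx hm) v) := by
  apply continuous_pi
  intro j
  simp only [Function.update_apply]
  by_cases h1 : j = lastIdx hm <;> by_cases h2 : j = sndIdx hm <;> simp [h1, h2, sndIdx_ne_lastIdx hm] <;> fun_prop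

lemma continuous_wvec : Continuous (fun p : Euc n × Euc n => wvec A hm p.1 p.2) := by
  apply continuous_euc
  intro i
  simp only [euc_coord _ i, inner_wvec]
  exact A.coe_continuous.comp (continuous_update2 hm _)

lemma continuous_update1 (v : Euc n) :
    Continuous (fun x : Euc n => Function.update (fun _ : Fin m => x) (lastIdx hm) v) := by
  apply continuous_pi
  intro j
  simp only [Function.update_apply]
  by_cases h1 : j = lastIdx hm <;> simp [h1] <;> fun_prop

lemma continuous_tvec : Continuous (tvec A hm) := by
  apply continuous_euc
  intro i
  simp only [euc_coord _ i, inner_tvec]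
  exact A.coe_continuous.comp (continuous_update1 hm _)

lemma hasFDerivAt_tpow (hA : IsSymmTensor A) (x : Euc n) :
    HasFDerivAt (tpow A) ((m : ℝ) • (innerSL ℝ (tvec A hm x))) x := by
  have hd : HasFDerivAt (fun y : Euc n => (fun _ : Fin m => y))
      (ContinuousLinearMap.pi fun _ : Fin m => ContinuousLinearMap.id ℝ (Euc n)) x :=
    (ContinuousLinearMap.pi fun _ : Fin m => ContinuousLinearMap.id ℝ (Euc n)).hasFDerivAt
  have h := (A.hasFDerivAt (x := fun _ : Fin m => x)).comp x hd
  refine h.congr_fderiv ?_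
  ext v
  simp only [ContinuousLinearMap.smul_apply, innerSL_apply_apply,
    ContinuousLinearMap.coe_comp', Function.comp_apply, ContinuousLinearMap.pi_apply,
    ContinuousLinearMap.id_apply, ContinuousMultilinearMap.linearDeriv_apply, smul_eq_mul]
  rw [Finset.sum_congr rfl (fun i _ => apply_update_const A hm hA x v i)]
  simp [Finset.sum_const, mul_comm]

def gfun (A : Tensor m n) (hm : 2 ≤ m) (x d : Euc n) (α : ℝ) : ℝ :=
  ⟪tvec A hm (x + α • d), d⟫ * (‖x + α • d‖ ^ 2) ^ (-(m : ℝ) / 2)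
    - tpow A (x + α • d) * ⟪x + α • d, d⟫ * (‖x + α • d‖ ^ 2) ^ (-(m : ℝ) / 2 - 1)

lemma qpos (x d : Euc n) (hx : ‖x‖ = 1) (hxd : ⟪x, d⟫ = 0) (α : ℝ) :
    ‖x + α • d‖ ^ 2 = 1 + α ^ 2 * ‖d‖ ^ 2 := by
  rw [norm_add_sq_real, hx, real_inner_smul_right, hxd, norm_smul]
  simp [mul_pow, sq_abs]

lemma tpow_smul (t : ℝ) (y : Euc n) : tpow A (t • y) = t ^ m * tpow A y := by
  have := A.map_smul_univ (fun _ : Fin m => t) (fun _ => y)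
  simpa [tpow, Finset.prod_const] using this

lemma phi_xcur (x d : Euc n) (α : ℝ)  :
    phi A (xcur x d α) = (1 / (m : ℝ)) * (tpow A (x + α • d) * (‖x + α • d‖ ^ 2) ^ (-(m : ℝ) / 2)) := by
  rw [phi, xcur, tpow_smul]
  have : (‖x + α • d‖⁻¹) ^ m = (‖x + α • d‖ ^ 2) ^ (-(m : ℝ) / 2) := by
    have h0 : (0:ℝ) ≤ ‖x + α • d‖ := norm_nonneg _
    have h2 : ((2:ℕ):ℝ) * (-(m:ℝ)/2) = -(m:ℝ) := by push_cast; ring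
    rw [← Real.rpow_natCast ‖x + α • d‖ 2, ← Real.rpow_mul h0, h2, Real.rpow_neg h0,
      Real.rpow_natCast, inv_pow]
  rw [this]; ring

lemma hasDerivAt_phi_xcur (hA : IsSymmTensor A) (x d : Euc n) (hx : ‖x‖ = 1)
    (hxd : ⟪x, d⟫ = 0) (α : ℝ) :
    HasDerivAt (fun β => phi A (xcur x d β)) (gfun A hm x d α) α := by
  have hm0 : (m : ℝ) ≠ 0 := by positivity
  have hq : ∀ β : ℝ, (0:ℝ) < ‖x + β • d‖ ^ 2 := by
    intro β; rw [qpos x d hx hxd]; positivity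
  have hc : HasDerivAt (fun β : ℝ => x + β • d) d α := by
    simpa using ((hasDerivAt_id α).smul_const d).const_add x
  have h1 : HasDerivAt (fun β => tpow A (x + β • d)) ((m : ℝ) * ⟪tvec A hm (x + α • d), d⟫) α := by
    have := (hasFDerivAt_tpow A hm hA (x + α • d)).comp_hasDerivAt α hc
    simp at this; exact this
  have h2 : HasDerivAt (fun β => ‖x + β • d‖ ^ 2) (2 * ⟪x + α • d, d⟫) α := by
    have heq : (fun β : ℝ => ‖x + β • d‖ ^ 2) = fun β => ⟪x + β • d, x + β • d⟫ := by
      funext β; rw [real_inner_self_eq_norm_sq]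
    rw [heq]
    have := hc.inner ℝ hc
    refine this.congr_deriv ?_
    rw [real_inner_comm]; ring
  have h3 : HasDerivAt (fun β => (‖x + β • d‖ ^ 2) ^ (-(m:ℝ)/2))
      ((2 * ⟪x + α • d, d⟫) * (-(m:ℝ)/2) * (‖x + α • d‖ ^ 2) ^ (-(m:ℝ)/2 - 1)) α :=
    h2.rpow_const (Or.inl (hq α).ne')
  have h4 : HasDerivAt (fun β => (1/(m:ℝ)) * (tpow A (x + β • d) * (‖x + β • d‖ ^ 2) ^ (-(m:ℝ)/2))) _ α :=
    ((h1.mul h3).const_mul (1 / (m:ℝ)))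
  have heq2 : (fun β => (1/(m:ℝ)) * (tpow A (x + β • d) * (‖x + β • d‖ ^ 2) ^ (-(m:ℝ)/2)))
      = fun β => phi A (xcur x d β) := by
    funext β; rw [phi_xcur]
  rw [heq2] at h4
  convert h4 using 1
  rw [gfun]
  field_simp
  ring

lemma xcur_zero (x d : Euc n) (hx : ‖x‖ = 1) : xcur x d 0 = x := by
  simp [xcur, hx]

lemma gfun_slope (hA : IsSymmTensor A) (x d : Euc n) (hx : ‖x‖ = 1)
    (hxd : ⟪x, d⟫ = 0) {β : ℝ} (hβ : 0 < β) :
    ∃ ξ ∈ Set.Ioo 0 β, gfun A hm x d ξ = (phi A (xcur x d β) - phi A x) / β := by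
  have hd := fun α => hasDerivAt_phi_xcur A hm hA x d hx hxd α
  have hcont : ContinuousOn (fun α => phi A (xcur x d α)) (Set.Icc 0 β) :=
    fun y _ => (hd y).continuousAt.continuousWithinAt
  obtain ⟨c, hc, hceq⟩ := exists_hasDerivAt_eq_slope (fun α => phi A (xcur x d α))
    (gfun A hm x d) hβ hcont (fun y _ => hd y)
  refine ⟨c, hc, ?_⟩
  rw [hceq, xcur_zero x d hx, sub_zero]

lemma gfun_zero (x d : Euc n) (hx : ‖x‖ = 1) (hxd : ⟪x, d⟫ = 0) :
    gfun A hm x d 0 = ⟪Fvec A hm x, d⟫ := by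
  simp only [gfun, zero_smul, add_zero, hx, hxd, Fvec, inner_sub_left, real_inner_smul_left]
  norm_num

lemma continuousAt_gfun (p : Euc n × Euc n × ℝ)
    (hp : ‖p.1 + p.2.2 • p.2.1‖ ^ 2 ≠ 0) :
    ContinuousAt (fun q : Euc n × Euc n × ℝ => gfun A hm q.1 q.2.1 q.2.2) p := by
  have hc : Continuous (fun q : Euc n × Euc n × ℝ => q.1 + q.2.2 • q.2.1) := by fun_prop
  have hq : Continuous (fun q : Euc n × Euc n × ℝ => ‖q.1 + q.2.2 • q.2.1‖ ^ 2) := by fun_prop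
  have hr1 : ContinuousAt (fun q : Euc n × Euc n × ℝ =>
      (‖q.1 + q.2.2 • q.2.1‖ ^ 2) ^ (-(m:ℝ)/2)) p :=
    hq.continuousAt.rpow_const (Or.inl hp)
  have hr2 : ContinuousAt (fun q : Euc n × Euc n × ℝ =>
      (‖q.1 + q.2.2 • q.2.1‖ ^ 2) ^ (-(m:ℝ)/2 - 1)) p :=
    hq.continuousAt.rpow_const (Or.inl hp)
  have ht : Continuous (fun q : Euc n × Euc n × ℝ => ⟪tvec A hm (q.1 + q.2.2 • q.2.1), q.2.1⟫) :=
    continuous_inner.comp (((continuous_tvec A hm).comp hc).prodMk (by fun_prop))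
  have htp : Continuous (fun q : Euc n × Euc n × ℝ => tpow A (q.1 + q.2.2 • q.2.1)) :=
    (continuous_tpow A).comp hc
  have hi : Continuous (fun q : Euc n × Euc n × ℝ => ⟪q.1 + q.2.2 • q.2.1, q.2.1⟫) :=
    continuous_inner.comp (hc.prodMk (by fun_prop))
  exact ((ht.continuousAt.mul hr1).sub
    ((htp.continuousAt.mul hi.continuousAt).mul hr2))


lemma tendsto_gfun {ι : Type*} {l : Filter ι} {xf df : ι → Euc n} {ξf : ι → ℝ}
    {x0 d0 : Euc n} {α0 : ℝ}
    (hx : Filter.Tendsto xf l (nhds x0)) (hd : Filter.Tendsto df l (nhds d0))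
    (hξ : Filter.Tendsto ξf l (nhds α0)) (hp : ‖x0 + α0 • d0‖ ^ 2 ≠ 0) :
    Filter.Tendsto (fun i => gfun A hm (xf i) (df i) (ξf i)) l
      (nhds (gfun A hm x0 d0 α0)) := by
  have hc : Filter.Tendsto (fun i => xf i + ξf i • df i) l (nhds (x0 + α0 • d0)) :=
    hx.add (hξ.smul hd)
  have hq : Filter.Tendsto (fun i => ‖xf i + ξf i • df i‖ ^ 2) l
      (nhds (‖x0 + α0 • d0‖ ^ 2)) := hc.norm.pow 2
  have hr1 : Filter.Tendsto (fun i => (‖xf i + ξf i • df i‖ ^ 2) ^ (-(m:ℝ)/2)) l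
      (nhds ((‖x0 + α0 • d0‖ ^ 2) ^ (-(m:ℝ)/2))) := hq.rpow_const (Or.inl hp)
  have hr2 : Filter.Tendsto (fun i => (‖xf i + ξf i • df i‖ ^ 2) ^ (-(m:ℝ)/2 - 1)) l
      (nhds ((‖x0 + α0 • d0‖ ^ 2) ^ (-(m:ℝ)/2 - 1))) := hq.rpow_const (Or.inl hp)
  have ht : Filter.Tendsto (fun i => tvec A hm (xf i + ξf i • df i)) l
      (nhds (tvec A hm (x0 + α0 • d0))) := ((continuous_tvec A hm).tendsto _).comp hc
  have htp : Filter.Tendsto (fun i => tpow A (xf i + ξf i • df i)) l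
      (nhds (tpow A (x0 + α0 • d0))) := ((continuous_tpow A).tendsto _).comp hc
  exact ((ht.inner hd).mul hr1).sub (((htp.mul (hc.inner hd))).mul hr2)


lemma continuous_Fvec : Continuous (Fvec A hm) :=
  (continuous_tvec A hm).sub ((continuous_tpow A).smul continuous_id)

lemma inner_x_Fvec (x : Euc n) (hx : ‖x‖ = 1) : ⟪x, Fvec A hm x⟫ = 0 := by
  have h1 : ⟪x, x⟫ = (1:ℝ) := by
    rw [real_inner_self_eq_norm_sq, hx]; norm_num
  rw [Fvec, inner_sub_right, real_inner_smul_right, real_inner_comm, inner_tvec_self, h1]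
  ring

lemma FderivL_apply (x d : Euc n) :
    FderivL A hm x d =
      ((m : ℝ) - 1) • wvec A hm x d - tpow A x • d - ((m : ℝ) * ⟪tvec A hm x, d⟫) • x := rfl

lemma continuous_FderivL : Continuous (fun p : Euc n × Euc n => FderivL A hm p.1 p.2) := by
  simp only [FderivL_apply]
  have h1 : Continuous fun p : Euc n × Euc n => ((m:ℝ)-1) • wvec A hm p.1 p.2 :=
    (continuous_const_smul ((m:ℝ)-1)).comp (continuous_wvec A hm)
  have h2 : Continuous fun p : Euc n × Euc n => tpow A p.1 • p.2 :=
    ((continuous_tpow A).comp continuous_fst).smul continuous_snd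
  have h3 : Continuous fun p : Euc n × Euc n => ((m:ℝ) * ⟪tvec A hm p.1, p.2⟫) • p.1 :=
    (continuous_const.fun_mul (continuous_inner.comp
      (((continuous_tvec A hm).comp continuous_fst).prodMk continuous_snd))).fun_smul continuous_fst
  exact (h1.sub h2).sub h3

lemma continuous_PprojG : Continuous (fun p : Euc n × Euc n =>
    Pproj p.1 (FderivL A hm p.1 p.2 + Fvec A hm p.1)) := by
  have hW : Continuous fun p : Euc n × Euc n => FderivL A hm p.1 p.2 + Fvec A hm p.1 :=
    (continuous_FderivL A hm).add ((continuous_Fvec A hm).comp continuous_fst)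
  unfold Pproj
  exact hW.sub ((continuous_inner.comp (continuous_fst.prodMk hW)).fun_smul continuous_fst)

lemma Pproj_eq_zero {x w : Euc n} (h : Pproj x w = 0) : w = ⟪x, w⟫ • x := by
  rw [Pproj, sub_eq_zero] at h
  exact h

end

set_option maxHeartbeats 1000000

/-- global convergence of the globalized Newton method: the function values
strictly decrease, the iterates are bounded, and any subsequential limit at which the
second-order condition holds is a `Z`-eigenvector. -/
theorem stmt12 {m n : ℕ} (hn : 1 ≤ n) (hm : 2 ≤ m) (A : Tensor m n) (hA : IsSymmTensor A)
    (σ ρ : ℝ) (hσ : σ ∈ Set.Ioo (0 : ℝ) (1 / 2)) (hρ : ρ ∈ Set.Ioo (0 : ℝ) 1)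
    (x d : ℕ → Euc n) (hxS : ∀ k, ‖x k‖ = 1) (hFk : ∀ k, Fvec A hm (x k) ≠ 0)
    (hdk : ∀ k, NewtonDir A hm (x k) (d k) ∨ d k = -Fvec A hm (x k))
    (hdesc : ∀ k, ⟪Fvec A hm (x k), d k⟫ < 0)
    (j : ℕ → ℕ)
    (hj : ∀ k, phi A (xcur (x k) (d k) (ρ ^ j k)) ≤
        phi A (x k) + σ * ρ ^ j k * ⟪Fvec A hm (x k), d k⟫)
    (hjmin : ∀ k, ∀ i < j k, ¬ (phi A (xcur (x k) (d k) (ρ ^ i)) ≤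
        phi A (x k) + σ * ρ ^ i * ⟪Fvec A hm (x k), d k⟫))
    (hstep : ∀ k, x (k + 1) = xcur (x k) (d k) (ρ ^ j k)) :
    (StrictAnti fun k => phi A (x k)) ∧ (∃ M : ℝ, ∀ k, ‖x k‖ ≤ M) ∧
    ∀ xb db : Euc n, ‖xb‖ = 1 →
      (∃ s : ℕ → ℕ, StrictMono s ∧
        Filter.Tendsto (fun i => x (s i)) Filter.atTop (nhds xb) ∧
        Filter.Tendsto (fun i => d (s i)) Filter.atTop (nhds db)) →
      (∀ dd : Euc n, dd ≠ 0 → ⟪xb, dd⟫ = 0 → 0 < ⟪dd, FderivL A hm xb dd⟫) →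
      Fvec A hm xb = 0 ∧ tvec A hm xb = tpow A xb • xb := by
  obtain ⟨hσ0, hσh⟩ := hσ
  obtain ⟨hρ0, hρ1⟩ := hρ
  have hxdk : ∀ k, ⟪x k, d k⟫ = 0 := by
    intro k
    rcases hdk k with h | h
    · exact h.1
    · rw [h, inner_neg_right, inner_x_Fvec A hm _ (hxS k), neg_zero]
  have hdec : ∀ k, phi A (x (k + 1)) < phi A (x k) := by
    intro k
    have h1 := hj k
    rw [← hstep k] at h1
    have hneg : σ * ρ ^ j k * ⟪Fvec A hm (x k), d k⟫ < 0 :=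
      mul_neg_of_pos_of_neg (by positivity) (hdesc k)
    linarith
  have hanti : StrictAnti fun k => phi A (x k) := strictAnti_nat_of_succ_lt hdec
  refine ⟨hanti, ⟨1, fun k => le_of_eq (hxS k)⟩, ?_⟩
  rintro xb db hxb ⟨s, hs, hxs, hds⟩ hpos
  have hphic : Continuous (phi A (m := m)) := continuous_const.mul (continuous_tpow A)
  have hphis : Filter.Tendsto (fun i => phi A (x (s i))) Filter.atTop (nhds (phi A xb)) :=
    (hphic.tendsto xb).comp hxs
  rcases tendsto_of_antitone hanti.antitone with hbot | ⟨L, hL⟩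
  · exact absurd (hbot.comp hs.tendsto_atTop) (not_tendsto_atBot_of_tendsto_nhds hphis)
  have hL1 : Filter.Tendsto (fun k => phi A (x (k + 1))) Filter.atTop (nhds L) :=
    hL.comp (Filter.tendsto_add_atTop_nat 1)
  have hdiff : Filter.Tendsto (fun k => phi A (x k) - phi A (x (k + 1))) Filter.atTop
      (nhds 0) := by
    simpa using hL.sub hL1
  have key : Filter.Tendsto (fun k => ρ ^ j k * ⟪Fvec A hm (x k), d k⟫) Filter.atTop
      (nhds 0) := by
    have hsq : Filter.Tendsto (fun k => -(σ * (ρ ^ j k * ⟪Fvec A hm (x k), d k⟫)))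
        Filter.atTop (nhds 0) := by
      apply squeeze_zero (fun k => ?_) (fun k => ?_) hdiff
      · have := mul_neg_of_pos_of_neg (show (0:ℝ) < σ * ρ ^ j k by positivity) (hdesc k)
        nlinarith
      · have h1 := hj k
        rw [← hstep k] at h1
        nlinarith
    have h2 := hsq.const_mul (-(1 / σ))
    rw [mul_zero] at h2
    apply h2.congr
    intro k
    field_simp
  have hFt : Filter.Tendsto (fun i => Fvec A hm (x (s i))) Filter.atTop
      (nhds (Fvec A hm xb)) := ((continuous_Fvec A hm).tendsto xb).comp hxs
  have hinner : Filter.Tendsto (fun i => ⟪Fvec A hm (x (s i)), d (s i)⟫) Filter.atTop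
      (nhds ⟪Fvec A hm xb, db⟫) := hFt.inner hds
  have ht0 : ⟪Fvec A hm xb, db⟫ ≤ 0 :=
    le_of_tendsto hinner (Filter.Eventually.of_forall fun i => (hdesc (s i)).le)
  have hxbdb : ⟪xb, db⟫ = 0 := by
    have h1 : Filter.Tendsto (fun i => ⟪x (s i), d (s i)⟫) Filter.atTop (nhds ⟪xb, db⟫) :=
      hxs.inner hds
    have h2 : Filter.Tendsto (fun i => ⟪x (s i), d (s i)⟫) Filter.atTop (nhds 0) := by
      simpa [hxdk] using (tendsto_const_nhds : Filter.Tendsto (fun _ : ℕ => (0:ℝ))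
        Filter.atTop (nhds 0))
    exact tendsto_nhds_unique h1 h2
  have ht : ⟪Fvec A hm xb, db⟫ = 0 := by
    by_contra hne
    have htlt : ⟪Fvec A hm xb, db⟫ < 0 := lt_of_le_of_ne ht0 hne
    have hαt : Filter.Tendsto (fun i => ρ ^ j (s i) * ⟪Fvec A hm (x (s i)), d (s i)⟫)
        Filter.atTop (nhds 0) := key.comp hs.tendsto_atTop
    have hα : Filter.Tendsto (fun i => (ρ : ℝ) ^ j (s i)) Filter.atTop (nhds 0) := by
      have hdiv := hαt.div hinner hne
      rw [zero_div] at hdiv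
      apply hdiv.congr
      intro i
      simp only [Pi.div_apply]
      rw [mul_div_assoc, div_self (hdesc (s i)).ne, mul_one]
    have hev : ∀ᶠ i in Filter.atTop, 1 ≤ j (s i) := by
      filter_upwards [hα.eventually_lt_const one_pos] with i hi
      by_contra hji
      have h0 : j (s i) = 0 := by omega
      rw [h0, pow_zero] at hi
      exact lt_irrefl _ hi
    have hβ : Filter.Tendsto (fun i => (ρ : ℝ) ^ (j (s i) - 1)) Filter.atTop (nhds 0) := by
      have h1 := hα.div_const ρ
      rw [zero_div] at h1
      apply h1.congr'
      filter_upwards [hev] with i hi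
      rw [div_eq_iff hρ0.ne', ← pow_succ]
      congr 1
      omega
    choose ξ hξmem hξeq using fun i =>
      gfun_slope A hm hA (x (s i)) (d (s i)) (hxS _) (hxdk _)
        (β := ρ ^ (j (s i) - 1)) (pow_pos hρ0 _)
    have hξ0 : Filter.Tendsto ξ Filter.atTop (nhds 0) :=
      tendsto_of_tendsto_of_tendsto_of_le_of_le tendsto_const_nhds hβ
        (fun i => (hξmem i).1.le) (fun i => (hξmem i).2.le)
    have htuple : Filter.Tendsto (fun i => (x (s i), d (s i), ξ i)) Filter.atTop
        (nhds (xb, db, 0)) := hxs.prodMk_nhds (hds.prodMk_nhds hξ0)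
    have hg : Filter.Tendsto (fun i => gfun A hm (x (s i)) (d (s i)) (ξ i)) Filter.atTop
        (nhds (gfun A hm xb db 0)) := by
      refine tendsto_gfun A hm hxs hds hξ0 ?_
      rw [zero_smul, add_zero, hxb]
      norm_num
    rw [gfun_zero A hm xb db hxb hxbdb] at hg
    have hle : σ * ⟪Fvec A hm xb, db⟫ ≤ ⟪Fvec A hm xb, db⟫ := by
      refine le_of_tendsto_of_tendsto (hinner.const_mul σ) hg ?_
      filter_upwards [hev] with i hi
      have hfail := hjmin (s i) (j (s i) - 1) (by omega)
      push_neg at hfail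
      have hβpos : (0:ℝ) < ρ ^ (j (s i) - 1) := pow_pos hρ0 _
      rw [hξeq i]
      rw [le_div_iff₀ hβpos]
      nlinarith
    nlinarith
  have hFb0 : Fvec A hm xb = 0 := by
    by_cases hfreq : ∃ᶠ i in Filter.atTop, d (s i) = -Fvec A hm (x (s i))
    · obtain ⟨u, hu, hueq⟩ := Filter.extraction_of_frequently_atTop hfreq
      have h1 : Filter.Tendsto (fun i => d (s (u i))) Filter.atTop (nhds db) :=
        hds.comp hu.tendsto_atTop
      have h2 : Filter.Tendsto (fun i => d (s (u i))) Filter.atTop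
          (nhds (-Fvec A hm xb)) := by
        have := (hFt.comp hu.tendsto_atTop).neg
        apply this.congr
        intro i
        exact (hueq i).symm
      have hdb : db = -Fvec A hm xb := tendsto_nhds_unique h1 h2
      rw [hdb, inner_neg_right, neg_eq_zero, real_inner_self_eq_norm_sq] at ht
      have := pow_eq_zero_iff (n := 2) (by norm_num) |>.mp ht
      exact norm_eq_zero.mp this
    · have hevN : ∀ᶠ i in Filter.atTop, NewtonDir A hm (x (s i)) (d (s i)) := by
        rw [Filter.not_frequently] at hfreq
        filter_upwards [hfreq] with i hi
        rcases hdk (s i) with h | h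
        · exact h
        · exact absurd h hi
      obtain ⟨u, hu, huN⟩ := Filter.extraction_of_frequently_atTop hevN.frequently
      have htuple : Filter.Tendsto (fun i => (x (s (u i)), d (s (u i)))) Filter.atTop
          (nhds (xb, db)) :=
        (hxs.comp hu.tendsto_atTop).prodMk_nhds (hds.comp hu.tendsto_atTop)
      have hGlim : Filter.Tendsto (fun i =>
          Pproj (x (s (u i))) (FderivL A hm (x (s (u i))) (d (s (u i)))
            + Fvec A hm (x (s (u i))))) Filter.atTop
          (nhds (Pproj xb (FderivL A hm xb db + Fvec A hm xb))) := by
        show Filter.Tendsto ((fun p : Euc n × Euc n =>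
            Pproj p.1 (FderivL A hm p.1 p.2 + Fvec A hm p.1)) ∘
            (fun i => (x (s (u i)), d (s (u i))))) Filter.atTop
          (nhds ((fun p : Euc n × Euc n =>
            Pproj p.1 (FderivL A hm p.1 p.2 + Fvec A hm p.1)) (xb, db)))
        exact ((continuous_PprojG A hm).tendsto (xb, db)).comp htuple
      have hGzero : Pproj xb (FderivL A hm xb db + Fvec A hm xb) = 0 := by
        refine tendsto_nhds_unique hGlim ?_
        have : (fun i => Pproj (x (s (u i))) (FderivL A hm (x (s (u i))) (d (s (u i)))
            + Fvec A hm (x (s (u i))))) = fun _ => (0 : Euc n) := by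
          funext i
          exact (huN i).2
        rw [this]
        exact tendsto_const_nhds
      have hW := Pproj_eq_zero hGzero
      have hdb0 : db = 0 := by
        by_contra hne
        have hp := hpos db hne hxbdb
        have h1 : ⟪db, FderivL A hm xb db + Fvec A hm xb⟫ = 0 := by
          rw [hW, real_inner_smul_right]
          have hdx : ⟪db, xb⟫ = (0:ℝ) := by rw [real_inner_comm]; exact hxbdb
          rw [hdx, mul_zero]
        rw [inner_add_right] at h1
        have h2 : ⟪db, Fvec A hm xb⟫ = 0 := by rw [real_inner_comm]; exact ht
        linarith
      rw [hdb0, map_zero, zero_add] at hW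
      rw [hW, inner_x_Fvec A hm xb hxb, zero_smul]
  exact ⟨hFb0, by have := hFb0; rw [Fvec, sub_eq_zero] at this; exact this⟩
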